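/- The following statements are equivalent for a graph G: (i) G contains no induced W_4, no induced dart, and no induced gem; (ii) every induced diamond of G contains a pair of twin vertices; (iii) every vertex v of G is block separable, i.e., every pair of adjacent vertices w, z ∈ N(v) with neither N[v] ⊆ N[w] nor N[v] ⊆ N[z] are twins in the subgraph of G induced by N[v]. -/

import Mathlib

variable {V : Type*}

/-- A set of vertices is monochromatic under the coloring `ρ`. -/
def Mono (ρ : V → ℕ) (W : Set V) : Prop := ∀ x ∈ W, ∀ y ∈ W, ρ x = ρ y

/-- `S` is an independent set of `G`. -/
def IndepSet (G : SimpleGraph V) (S : Set V) : Prop := ∀ x ∈ S, ∀ y ∈ S, ¬G.Adj x y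

/-- `W` is a star of `G` with center `v` (it induces a `K_{1,m}` with `m ≥ 1`). -/
def IsStarC (G : SimpleGraph V) (v : V) (W : Set V) : Prop :=
  v ∈ W ∧ (W \ {v}).Nonempty ∧ (∀ u ∈ W \ {v}, G.Adj v u) ∧ IndepSet G (W \ {v})

/-- `W` is a star of `G`. -/
def IsStar (G : SimpleGraph V) (W : Set V) : Prop := ∃ v, IsStarC G v W

/-- `W` is a maximal star of `G`. -/
def IsMaxStar (G : SimpleGraph V) (W : Set V) : Prop :=
  IsStar G W ∧ ∀ W', IsStar G W' → W ⊆ W' → W' = W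

/-- `W` is a biclique of `G` (it induces a complete bipartite graph). -/
def IsBiclique (G : SimpleGraph V) (W : Set V) : Prop :=
  ∃ S T : Set V, S.Nonempty ∧ T.Nonempty ∧ Disjoint S T ∧ S ∪ T = W ∧
    (∀ s ∈ S, ∀ t ∈ T, G.Adj s t) ∧ IndepSet G S ∧ IndepSet G T

/-- `W` is a maximal biclique of `G`. -/
def IsMaxBiclique (G : SimpleGraph V) (W : Set V) : Prop :=
  IsBiclique G W ∧ ∀ W', IsBiclique G W' → W ⊆ W' → W' = W

/-- A star coloring: no maximal star is monochromatic. -/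
def StarColoring (G : SimpleGraph V) (ρ : V → ℕ) : Prop :=
  ∀ W, IsMaxStar G W → ¬Mono ρ W

/-- A biclique coloring: no maximal biclique is monochromatic. -/
def BicliqueColoring (G : SimpleGraph V) (ρ : V → ℕ) : Prop :=
  ∀ W, IsMaxBiclique G W → ¬Mono ρ W

/-- A star `k`-coloring uses colors `{1, …, k}`. -/
def StarKColoring (G : SimpleGraph V) (k : ℕ) (ρ : V → ℕ) : Prop :=
  (∀ x, ρ x ∈ Set.Icc 1 k) ∧ StarColoring G ρ

/-- A biclique `k`-coloring uses colors `{1, …, k}`. -/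
def BicliqueKColoring (G : SimpleGraph V) (k : ℕ) (ρ : V → ℕ) : Prop :=
  (∀ x, ρ x ∈ Set.Icc 1 k) ∧ BicliqueColoring G ρ

/-- A `k`-list assignment: each vertex gets a list of exactly `k` colors. -/
def IsListAssignment (L : V → Set ℕ) (k : ℕ) : Prop := ∀ v, (L v).Finite ∧ (L v).ncard = k

/-- An `L`-coloring: each vertex gets a color from its own list. -/
def IsLColoring (L : V → Set ℕ) (ρ : V → ℕ) : Prop := ∀ v, ρ v ∈ L v

/-- `G` is star `k`-choosable. -/
def StarChoosable (G : SimpleGraph V) (k : ℕ) : Prop :=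
  ∀ L : V → Set ℕ, IsListAssignment L k → ∃ ρ, IsLColoring L ρ ∧ StarColoring G ρ

/-- `G` is biclique `k`-choosable. -/
def BicliqueChoosable (G : SimpleGraph V) (k : ℕ) : Prop :=
  ∀ L : V → Set ℕ, IsListAssignment L k → ∃ ρ, IsLColoring L ρ ∧ BicliqueColoring G ρ

/-- The star chromatic number `χ_S`. -/
noncomputable def starChromaticNumber (G : SimpleGraph V) : ℕ :=
  sInf {k | ∃ ρ, StarKColoring G k ρ}

/-- The biclique chromatic number `χ_B`. -/
noncomputable def bicliqueChromaticNumber (G : SimpleGraph V) : ℕ :=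
  sInf {k | ∃ ρ, BicliqueKColoring G k ρ}

/-- The star choice number `ch_S`. -/
noncomputable def starChoiceNumber (G : SimpleGraph V) : ℕ := sInf {k | StarChoosable G k}

/-- The biclique choice number `ch_B`. -/
noncomputable def bicliqueChoiceNumber (G : SimpleGraph V) : ℕ := sInf {k | BicliqueChoosable G k}

/-- `l` is a leaf (degree-one vertex) whose unique neighbor is `v`. -/
def IsLeafAt (G : SimpleGraph V) (l v : V) : Prop := G.neighborSet l = {v}

/-- `v` is a leafed vertex: some leaf is adjacent to it. -/
def IsLeafed (G : SimpleGraph V) (v : V) : Prop := ∃ l, IsLeafAt G l v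

/-- `S` induces a cycle `C_n` in `G`. -/
def IsInducedCycle (G : SimpleGraph V) (n : ℕ) (S : Set V) : Prop :=
  ∃ f : ZMod n → V, Function.Injective f ∧ Set.range f = S ∧
    ∀ i j : ZMod n, G.Adj (f i) (f j) ↔ (j = i + 1 ∨ i = j + 1)

/-- `S` induces a hole (chordless cycle of length at least 4) in `G`. -/
def IsHole (G : SimpleGraph V) (S : Set V) : Prop := ∃ n, 4 ≤ n ∧ IsInducedCycle G n S

/-- `S` induces a complete graph `K_m` in `G`. -/
def IsInducedComplete (G : SimpleGraph V) (m : ℕ) (S : Set V) : Prop :=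
  G.IsClique S ∧ S.Finite ∧ S.ncard = m

/-- The closed neighborhood `N[v]`. -/
def closedNbhd (G : SimpleGraph V) (v : V) : Set V := insert v (G.neighborSet v)

/-- `v` and `w` are twins: `N[v] = N[w]`. -/
def Twins (G : SimpleGraph V) (v w : V) : Prop := closedNbhd G v = closedNbhd G w

/-- `w` and `z` are twins in the subgraph of `G` induced by `A`. -/
def TwinsIn (G : SimpleGraph V) (A : Set V) (w z : V) : Prop :=
  ∀ y ∈ A, ((y = w ∨ G.Adj y w) ↔ (y = z ∨ G.Adj y z))

/-- `w` dominates `v`: `N[v] ⊆ N[w]`. -/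
def Dominates (G : SimpleGraph V) (w v : V) : Prop := closedNbhd G v ⊆ closedNbhd G w

/-- `K` is a `k`-keeper connecting `v` and `w`. -/
def IsKeeper (G : SimpleGraph V) (k : ℕ) (v w : V) (K : Set V) : Prop :=
  v ∉ K ∧ w ∉ K ∧
  ∃ (d : Fin (k - 1) → V) (C : Fin (k - 1) → Set V),
    Function.Injective d ∧
    (∀ i, (C i).Finite ∧ (C i).ncard = k) ∧
    (∀ i j, d i ∉ C j) ∧
    (∀ i j, i ≠ j → Disjoint (C i) (C j)) ∧
    K = Set.range d ∪ ⋃ i, C i ∧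
    G.IsClique (Set.range d ∪ {v, w}) ∧
    (∀ i, G.IsClique (insert (d i) (C i))) ∧
    (∀ x ∈ K, ∀ y, G.Adj x y →
      (x ∈ Set.range d ∧ y ∈ Set.range d ∪ {v, w}) ∨
      (∃ i, x ∈ insert (d i) (C i) ∧ y ∈ insert (d i) (C i)))

/-- `C` is a `k`-switcher connecting `U`. -/
def IsSwitcher (G : SimpleGraph V) (k : ℕ) (U C : Set V) : Prop :=
  Disjoint C U ∧ C.Finite ∧ C.ncard = k ∧
  (∀ u ∈ U, G.IsClique (insert u C)) ∧
  (∀ x ∈ C, ∀ y, G.Adj x y → y ∈ C ∪ U)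

/-- `S` is a long `k`-switcher connecting `W`. -/
def IsLongSwitcher (G : SimpleGraph V) (k : ℕ) (W S : Set V) : Prop :=
  ∃ (h : ℕ) (w u : ℕ → V) (C : Set V) (Q : ℕ → Set V),
    2 ≤ h ∧
    Set.InjOn w (Set.Icc 1 h) ∧ w '' Set.Icc 1 h = W ∧
    Set.InjOn u (Set.Icc 1 h) ∧
    (∀ i ∈ Set.Icc 1 h, IsLeafed G (u i)) ∧
    IndepSet G (u '' Set.Icc 1 h) ∧
    IsSwitcher G k (u '' Set.Icc 1 h) C ∧
    (∀ i ∈ Set.Icc 1 h, IsKeeper G k (w i) (u i) (Q i)) ∧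
    S = u '' Set.Icc 1 h ∪ C ∪ ⋃ i ∈ Set.Icc 1 h, Q i ∧
    Disjoint (u '' Set.Icc 1 h) C ∧
    (∀ i ∈ Set.Icc 1 h, Disjoint (u '' Set.Icc 1 h) (Q i)) ∧
    (∀ i ∈ Set.Icc 1 h, Disjoint C (Q i)) ∧
    (∀ i ∈ Set.Icc 1 h, ∀ j ∈ Set.Icc 1 h, i ≠ j → Disjoint (Q i) (Q j)) ∧
    Disjoint S W ∧
    (∀ i ∈ Set.Icc 1 h, ∀ y, G.Adj (u i) y → y ∈ C ∪ Q i ∨ IsLeafAt G y (u i))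

/-- `K` is an `ℓ`-cluster connecting `⟨s, X, −X⟩`, where `X = range x` and `−X = range mx`. -/
def IsCluster (G : SimpleGraph V) (ℓ : ℕ) (s : V) (x mx : ZMod ℓ → V) (K : Set V) : Prop :=
  2 ≤ ℓ ∧
  ∃ vc : ZMod ℓ → V,
    Function.Injective x ∧ Function.Injective mx ∧ Function.Injective vc ∧
    Set.range vc = K ∧
    Disjoint (Set.range x) (Set.range mx) ∧
    Disjoint (Set.range x) K ∧ Disjoint (Set.range mx) K ∧
    s ∉ Set.range x ∪ Set.range mx ∪ K ∧
    (∀ i, IsLeafed G (vc i)) ∧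
    (∀ i, G.Adj s (x i)) ∧ (∀ i, G.Adj s (mx i)) ∧ (∀ i, G.Adj s (vc i)) ∧
    (∀ i, G.Adj (x i) (mx i)) ∧ (∀ i, G.Adj (mx i) (vc i)) ∧ (∀ i, G.Adj (vc i) (x (i + 1))) ∧
    (∀ i j, ¬G.Adj (x i) (x j)) ∧ (∀ i j, ¬G.Adj (mx i) (mx j)) ∧
    (∀ i j, ¬G.Adj (vc i) (vc j)) ∧
    (∀ i j, G.Adj (x i) (mx j) → i = j) ∧
    (∀ i j, G.Adj (mx i) (vc j) → i = j) ∧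
    (∀ i j, G.Adj (vc i) (x j) → j = i + 1) ∧
    (∀ i, ∀ y, G.Adj (vc i) y → y = s ∨ y = mx i ∨ y = x (i + 1) ∨ IsLeafAt G y (vc i))

/-- `S` is a list switcher connecting `W`. -/
def IsListSwitcher (G : SimpleGraph V) (W S : Set V) : Prop :=
  ∃ (h : ℕ) (w u : ℕ → V) (C : Set V),
    2 ≤ h ∧
    Set.InjOn w (Set.Icc 1 h) ∧ w '' Set.Icc 1 h = W ∧
    Set.InjOn u (Set.Icc 1 h) ∧
    IndepSet G (u '' Set.Icc 1 h) ∧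
    IsSwitcher G 2 (u '' Set.Icc 1 h) C ∧
    S = u '' Set.Icc 1 h ∪ C ∧
    Disjoint (u '' Set.Icc 1 h) C ∧
    Disjoint S W ∧
    (∀ i ∈ Set.Icc 1 h, G.Adj (w i) (u i)) ∧
    (∀ i ∈ Set.Icc 1 h, ∀ y, G.Adj (u i) y → y ∈ C ∨ y = w i)

/-- `F` is a `k`-forcer connecting `v`. -/
def IsForcer (G : SimpleGraph V) (k : ℕ) (v : V) (F : Set V) : Prop :=
  ∃ (A B : Set V) (C : V → V → Set V),
    A.Finite ∧ A.ncard = k - 1 ∧ B.Finite ∧ B.ncard = k ^ k - 1 ∧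
    (∀ a ∈ A, IsLeafed G a) ∧ (∀ b ∈ B, IsLeafed G b) ∧
    v ∉ A ∧ v ∉ B ∧ Disjoint A B ∧
    (∀ a ∈ insert v A, ∀ b ∈ B, ¬G.Adj a b ∧ IsSwitcher G k {a, b} (C a b)) ∧
    (∀ a ∈ insert v A, ∀ b ∈ B, ∀ a' ∈ insert v A, ∀ b' ∈ B,
      (a ≠ a' ∨ b ≠ b') → Disjoint (C a b) (C a' b')) ∧
    (∀ a ∈ insert v A, ∀ b ∈ B, Disjoint (C a b) (insert v (A ∪ B))) ∧
    F = A ∪ B ∪ ⋃ a ∈ insert v A, ⋃ b ∈ B, C a b ∧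
    (∀ x ∈ A ∪ B, ∀ y, G.Adj x y →
      (∃ a ∈ insert v A, ∃ b ∈ B, (x = a ∨ x = b) ∧ y ∈ C a b) ∨ IsLeafAt G y x)

/-- Given a `k`-forcer `F` connecting `v` and a list assignment `L`, the color `c` is
`L`-admissible for `v`. -/
def LAdmissible (G : SimpleGraph V) (F : Set V) (L : V → Set ℕ) (v : V) (c : ℕ) : Prop :=
  c ∈ L v ∧ ∃ ρ : V → ℕ, IsLColoring L ρ ∧ ρ v = c ∧
    ∀ f ∈ F, ∀ W, IsMaxStar G W → IsStarC G f W → ¬Mono ρ W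

/-- The vertices `a, b, c, d` induce a diamond with universal vertices `a, b`. -/
def IsInducedDiamond (G : SimpleGraph V) (a b c d : V) : Prop :=
  a ≠ b ∧ a ≠ c ∧ a ≠ d ∧ b ≠ c ∧ b ≠ d ∧ c ≠ d ∧
  G.Adj a b ∧ G.Adj a c ∧ G.Adj a d ∧ G.Adj b c ∧ G.Adj b d ∧ ¬G.Adj c d

/-- `G` contains an induced 4-wheel `W_4`. -/
def HasInducedW4 (G : SimpleGraph V) : Prop :=
  ∃ u a b c d : V, [u, a, b, c, d].Pairwise (· ≠ ·) ∧
    G.Adj u a ∧ G.Adj u b ∧ G.Adj u c ∧ G.Adj u d ∧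
    G.Adj a b ∧ G.Adj b c ∧ G.Adj c d ∧ G.Adj d a ∧ ¬G.Adj a c ∧ ¬G.Adj b d

/-- `G` contains an induced dart. -/
def HasInducedDart (G : SimpleGraph V) : Prop :=
  ∃ a b c d e : V, [a, b, c, d, e].Pairwise (· ≠ ·) ∧
    IsInducedDiamond G a b c d ∧ G.Adj a e ∧ ¬G.Adj b e ∧ ¬G.Adj c e ∧ ¬G.Adj d e

/-- `G` contains an induced gem. -/
def HasInducedGem (G : SimpleGraph V) : Prop :=
  ∃ u p₁ p₂ p₃ p₄ : V, [u, p₁, p₂, p₃, p₄].Pairwise (· ≠ ·) ∧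
    G.Adj u p₁ ∧ G.Adj u p₂ ∧ G.Adj u p₃ ∧ G.Adj u p₄ ∧
    G.Adj p₁ p₂ ∧ G.Adj p₂ p₃ ∧ G.Adj p₃ p₄ ∧ ¬G.Adj p₁ p₃ ∧ ¬G.Adj p₁ p₄ ∧ ¬G.Adj p₂ p₄

/-- `v` is block separable. -/
def BlockSeparable (G : SimpleGraph V) (v : V) : Prop :=
  ∀ w ∈ G.neighborSet v, ∀ z ∈ G.neighborSet v, G.Adj w z →
    ¬Dominates G w v → ¬Dominates G z v → TwinsIn G (closedNbhd G v) w z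

/-- `B` is a block (a maximal set of pairwise twins) of the subgraph of `G` induced by `A`. -/
def IsBlockOf (G : SimpleGraph V) (A B : Set V) : Prop :=
  B ⊆ A ∧ B.Nonempty ∧ (∀ p ∈ B, ∀ q ∈ B, TwinsIn G A p q) ∧
  ∀ B', B' ⊆ A → (∀ p ∈ B', ∀ q ∈ B', TwinsIn G A p q) → B ⊆ B' → B' = B

/-- `B` is a block of `G`. -/
def IsBlock (G : SimpleGraph V) (B : Set V) : Prop := IsBlockOf G Set.univ B

/-- `B 0, …, B ℓ` is the block separation of `v`. -/
def IsBlockSeparation (G : SimpleGraph V) (v : V) (ℓ : ℕ) (B : ℕ → Set V) : Prop :=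
  v ∈ B 0 ∧
  (∀ i ≤ ℓ, IsBlockOf G (closedNbhd G v) (B i)) ∧
  (∀ i ≤ ℓ, ∀ j ≤ ℓ, i ≠ j → Disjoint (B i) (B j)) ∧
  (⋃ i ∈ Set.Iic ℓ, B i) = closedNbhd G v ∧
  (∀ i, 1 ≤ i → i ≤ ℓ → ∀ j, 1 ≤ j → j ≤ ℓ → i ≠ j → ∀ a ∈ B i, ∀ b ∈ B j, ¬G.Adj a b)

/-- `S` is a diamond `k`-switcher connecting `U`. -/
def IsDiamondSwitcher (G : SimpleGraph V) (k : ℕ) (U S : Set V) : Prop :=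
  ∃ (h : ℕ) (u w : ℕ → V) (Q : ℕ → Set V) (C : Set V),
    2 ≤ h ∧
    Set.InjOn u (Set.Icc 1 h) ∧ u '' Set.Icc 1 h = U ∧
    Set.InjOn w (Set.Icc 1 h) ∧
    (∀ i, 2 ≤ i → i ≤ h → IsLeafed G (w i)) ∧
    C.Finite ∧ C.ncard = k ∧
    G.IsClique (insert (w 1) C) ∧
    (∀ i, 2 ≤ i → i ≤ h → G.Adj (w 1) (w i)) ∧
    (∀ i j, 2 ≤ i → i ≤ h → 2 ≤ j → j ≤ h → ¬G.Adj (w i) (w j)) ∧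
    (∀ i ∈ Set.Icc 1 h, IsKeeper G k (u i) (w i) (Q i)) ∧
    S = w '' Set.Icc 1 h ∪ C ∪ ⋃ i ∈ Set.Icc 1 h, Q i ∧
    Disjoint (w '' Set.Icc 1 h) C ∧
    (∀ i ∈ Set.Icc 1 h, Disjoint (w '' Set.Icc 1 h) (Q i)) ∧
    (∀ i ∈ Set.Icc 1 h, Disjoint C (Q i)) ∧
    (∀ i ∈ Set.Icc 1 h, ∀ j ∈ Set.Icc 1 h, i ≠ j → Disjoint (Q i) (Q j)) ∧
    Disjoint S U ∧
    (∀ y, G.Adj (w 1) y → y ∈ C ∨ (∃ i, 2 ≤ i ∧ i ≤ h ∧ y = w i) ∨ y ∈ Q 1) ∧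
    (∀ i, 2 ≤ i → i ≤ h → ∀ y, G.Adj (w i) y → y = w 1 ∨ y ∈ Q i ∨ IsLeafAt G y (w i)) ∧
    (∀ x ∈ C, ∀ y, G.Adj x y → y ∈ C ∨ y = w 1)

/-- `S` is a split `k`-switcher connecting `W`, with respect to the split partition
`(Sg, Qg)` of `G`. -/
def IsSplitSwitcher (G : SimpleGraph V) (Sg Qg : Set V) (k : ℕ) (W S : Set V) : Prop :=
  ∃ (X Y : Set V) (a₁ a₂ : V),
    X ⊆ Qg ∧ Y ⊆ Qg ∧ a₁ ∈ Sg ∧ a₂ ∈ Sg ∧ a₁ ≠ a₂ ∧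
    X.Finite ∧ X.ncard = k ∧ Y.Finite ∧ Y.ncard = k ∧ Disjoint X Y ∧
    a₁ ∉ X ∪ Y ∧ a₂ ∉ X ∪ Y ∧
    S = X ∪ Y ∪ {a₁, a₂} ∧ Disjoint S W ∧
    (∀ v ∈ W ∪ {a₁, a₂}, G.IsClique (insert v X)) ∧
    G.IsClique (insert a₁ Y) ∧ G.IsClique (insert a₂ Y) ∧
    (∀ x ∈ X ∪ Y, ∀ y ∈ Sg, G.Adj x y →
      ((x ∈ X ∧ (y ∈ W ∨ y = a₁ ∨ y = a₂)) ∨ (x ∈ Y ∧ (y = a₁ ∨ y = a₂)))) ∧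
    (∀ y, G.Adj a₁ y → y ∈ X ∪ Y) ∧
    (∀ y, G.Adj a₂ y → y ∈ X ∪ Y)

/-- `G` together with the vertex partition `QB 1, …, QB (r+1), SB 1, …, SB r` realizes the
threshold representation `(q, s)`. -/
def IsThresholdRealization (G : SimpleGraph V) (r : ℕ) (q s : ℕ → ℕ)
    (QB SB : ℕ → Set V) : Prop :=
  (∀ i ∈ Set.Icc 1 (r + 1), (QB i).Finite ∧ (QB i).ncard = q i) ∧
  (∀ i ∈ Set.Icc 1 r, (SB i).Finite ∧ (SB i).ncard = s i) ∧
  (∀ i ∈ Set.Icc 1 (r + 1), ∀ j ∈ Set.Icc 1 (r + 1), i ≠ j → Disjoint (QB i) (QB j)) ∧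
  (∀ i ∈ Set.Icc 1 r, ∀ j ∈ Set.Icc 1 r, i ≠ j → Disjoint (SB i) (SB j)) ∧
  (∀ i ∈ Set.Icc 1 (r + 1), ∀ j ∈ Set.Icc 1 r, Disjoint (QB i) (SB j)) ∧
  ((⋃ i ∈ Set.Icc 1 (r + 1), QB i) ∪ ⋃ i ∈ Set.Icc 1 r, SB i) = Set.univ ∧
  (∀ a b : V, G.Adj a b ↔ a ≠ b ∧
    ((∃ i ∈ Set.Icc 1 (r + 1), ∃ j ∈ Set.Icc 1 (r + 1),
        ((a ∈ QB i ∧ b ∈ QB j) ∨ (b ∈ QB i ∧ a ∈ QB j))) ∨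
     (∃ i ∈ Set.Icc 1 r, ∃ j ∈ Set.Icc 1 r, i ≤ j ∧
        ((a ∈ QB i ∧ b ∈ SB j) ∨ (b ∈ QB i ∧ a ∈ SB j)))))

/-- The index `i` of `Q` is `k`-forbidden for the threshold representation `(q, s)`. -/
def KForbiddenIndex (k r : ℕ) (q s : ℕ → ℕ) (i : ℕ) : Prop :=
  k < q i ∨ (q i = k ∧ ∃ j, i < j ∧ j ≤ r + 1 ∧ q j = k ∧
    (∀ h, i < h → h < j → q h = k - 1) ∧ ∀ h, i ≤ h → h < j → s h = 1)

/-- `G` realizes the netblock representation `(T, wt)`, where `VT` is the vertex set of the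
tree `T` and `B v w` is the clique inserted for the tree edge `vw`. -/
def IsNetblockRealization (G T : SimpleGraph V) (VT : Set V)
    (wt : V → V → ℕ) (B : V → V → Set V) : Prop :=
  (∀ v w, T.Adj v w → v ∈ VT ∧ w ∈ VT) ∧
  (T.induce VT).IsTree ∧
  (∀ v w, wt v w = wt w v) ∧
  (∀ v w, B v w = B w v) ∧
  (∀ v w, T.Adj v w → (B v w).Finite ∧ (B v w).ncard = wt v w) ∧
  (∀ v w, T.Adj v w → Disjoint (B v w) VT) ∧
  (∀ v w v' w', T.Adj v w → T.Adj v' w' → ¬(v = v' ∧ w = w') → ¬(v = w' ∧ w = v') →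
    Disjoint (B v w) (B v' w')) ∧
  {a | a ∈ VT ∨ ∃ v w, T.Adj v w ∧ a ∈ B v w} = Set.univ ∧
  (∀ a b, G.Adj a b ↔ a ≠ b ∧ ∃ v w, T.Adj v w ∧
    a ∈ insert v (insert w (B v w)) ∧ b ∈ insert v (insert w (B v w)))

/-- `R` is the vertex set of a `k`-subtree of the netblock representation `(T, wt)`. -/
def IsKSubtree (T : SimpleGraph V) (VT : Set V) (wt : V → V → ℕ) (k : ℕ) (R : Set V) : Prop :=
  R ⊆ VT ∧ R.Nonempty ∧ (T.induce R).Connected ∧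
  ∀ v ∈ R, ∀ w ∈ R, T.Adj v w → wt v w = k

/-- `R` is the vertex set of a maximal `k`-subtree of `(T, wt)`: its edge set is not properly
included in the edge set of another `k`-subtree. -/
def IsMaxKSubtree (T : SimpleGraph V) (VT : Set V) (wt : V → V → ℕ) (k : ℕ) (R : Set V) :
    Prop :=
  IsKSubtree T VT wt k R ∧
  ∀ R', IsKSubtree T VT wt k R' →
    (∀ v ∈ R, ∀ w ∈ R, T.Adj v w → v ∈ R' ∧ w ∈ R') →
    (∀ v ∈ R', ∀ w ∈ R', T.Adj v w → v ∈ R ∧ w ∈ R)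

/-- `v` is a `k`-exit vertex of `(T, wt)`. -/
def IsExitVertex (T : SimpleGraph V) (wt : V → V → ℕ) (k : ℕ) (v : V) : Prop :=
  ∃ w, T.Adj v w ∧ wt v w < k

section AuxProofs

variable {G : SimpleGraph V}

private lemma mem_cn {v x : V} : x ∈ closedNbhd G v ↔ x = v ∨ G.Adj v x := by
  simp [closedNbhd]

private lemma twins_symm {p q : V} (h : Twins G p q) : Twins G q p := Eq.symm h

private lemma no_twins {p q x : V} (h1 : x = p ∨ G.Adj p x) (h2 : x ≠ q)
    (h3 : ¬G.Adj q x) : ¬Twins G p q := by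
  intro h
  have h' : closedNbhd G p = closedNbhd G q := h
  have hx : x ∈ closedNbhd G q := h' ▸ mem_cn.mpr h1
  rcases mem_cn.mp hx with h'' | h''
  exacts [h2 h'', h3 h'']

private lemma no_dom {w v x : V} (h1 : x = v ∨ G.Adj v x) (h2 : x ≠ w)
    (h3 : ¬G.Adj w x) : ¬Dominates G w v := by
  intro h
  rcases mem_cn.mp (h (mem_cn.mpr h1)) with h' | h'
  exacts [h2 h', h3 h']

private lemma twins_dom {p q : V} (h : Twins G p q) : Dominates G q p := by
  have h' : closedNbhd G p = closedNbhd G q := h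
  intro x hx
  exact h' ▸ hx

private lemma pw5 {v1 v2 v3 v4 v5 : V} (h12 : v1 ≠ v2) (h13 : v1 ≠ v3) (h14 : v1 ≠ v4)
    (h15 : v1 ≠ v5) (h23 : v2 ≠ v3) (h24 : v2 ≠ v4) (h25 : v2 ≠ v5) (h34 : v3 ≠ v4)
    (h35 : v3 ≠ v5) (h45 : v4 ≠ v5) : [v1, v2, v3, v4, v5].Pairwise (· ≠ ·) := by
  refine List.Pairwise.cons (fun x hx => ?_) (List.Pairwise.cons (fun x hx => ?_)
    (List.Pairwise.cons (fun x hx => ?_) (List.Pairwise.cons (fun x hx => ?_)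
      (List.pairwise_singleton _ _))))
  all_goals simp only [List.mem_cons, List.mem_singleton, List.not_mem_nil, or_false] at hx
  · rcases hx with rfl | rfl | rfl | rfl
    exacts [h12, h13, h14, h15]
  · rcases hx with rfl | rfl | rfl
    exacts [h23, h24, h25]
  · rcases hx with rfl | rfl
    exacts [h34, h35]
  · rcases hx with rfl
    exact h45

private lemma pw5' {v1 v2 v3 v4 v5 : V} (h : [v1, v2, v3, v4, v5].Pairwise (· ≠ ·)) :
    v1 ≠ v2 ∧ v1 ≠ v3 ∧ v1 ≠ v4 ∧ v1 ≠ v5 ∧ v2 ≠ v3 ∧ v2 ≠ v4 ∧ v2 ≠ v5 ∧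
      v3 ≠ v4 ∧ v3 ≠ v5 ∧ v4 ≠ v5 := by
  obtain ⟨h1, h⟩ := List.pairwise_cons.mp h
  obtain ⟨h2, h⟩ := List.pairwise_cons.mp h
  obtain ⟨h3, h⟩ := List.pairwise_cons.mp h
  obtain ⟨h4, -⟩ := List.pairwise_cons.mp h
  exact ⟨h1 v2 (by simp), h1 v3 (by simp), h1 v4 (by simp), h1 v5 (by simp),
    h2 v3 (by simp), h2 v4 (by simp), h2 v5 (by simp),
    h3 v4 (by simp), h3 v5 (by simp), h4 v5 (by simp)⟩

end AuxProofs
section MainProofs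

variable {G : SimpleGraph V}

/-- If `G` is `{W₄, dart, gem}`-free and `a b c d` is an induced diamond, then a vertex `e`
adjacent to `a` but not in `N[b]` yields a contradiction. -/
private lemma key1 (hW : ¬HasInducedW4 G) (hD : ¬HasInducedDart G) (hGm : ¬HasInducedGem G)
    {a b c d e : V} (hdm : IsInducedDiamond G a b c d)
    (he1 : G.Adj a e) (he2 : e ≠ b) (he3 : ¬G.Adj b e) : False := by
  obtain ⟨nab, nac, nad, nbc, nbd, ncd, Aab, Aac, Aad, Abc, Abd, Ncd⟩ := hdm
  have hec : e ≠ c := fun h => he3 (h ▸ Abc)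
  have hed : e ≠ d := fun h => he3 (h ▸ Abd)
  have hea : e ≠ a := fun h => G.loopless.irrefl a (h ▸ he1)
  by_cases hce : G.Adj c e <;> by_cases hde : G.Adj d e
  · -- W₄ on (a; c, e, d, b)
    exact hW ⟨a, c, e, d, b,
      pw5 nac hea.symm nad nab hec.symm ncd nbc.symm hed he2 nbd.symm,
      Aac, he1, Aad, Aab, hce, hde.symm, Abd.symm, Abc, Ncd, fun h => he3 h.symm⟩
  · -- gem on (a; e, c, b, d)
    exact hGm ⟨a, e, c, b, d,
      pw5 hea.symm nac nab nad hec he2 hed nbc.symm ncd nbd,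
      he1, Aac, Aab, Aad, hce.symm, Abc.symm, Abd,
      fun h => he3 h.symm, fun h => hde h.symm, Ncd⟩
  · -- gem on (a; e, d, b, c)
    exact hGm ⟨a, e, d, b, c,
      pw5 hea.symm nad nab nac hed he2 hec nbd.symm (fun h => ncd h.symm) nbc,
      he1, Aad, Aab, Aac, hde.symm, Abd.symm, Abc,
      fun h => he3 h.symm, fun h => hce h.symm, fun h => Ncd h.symm⟩
  · -- dart on (a, b, c, d, e)
    exact hD ⟨a, b, c, d, e,
      pw5 nab nac nad hea.symm nbc nbd he2.symm ncd hec.symm hed.symm,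
      ⟨nab, nac, nad, nbc, nbd, ncd, Aab, Aac, Aad, Abc, Abd, Ncd⟩,
      he1, he3, hce, hde⟩

private lemma AtoB (hW : ¬HasInducedW4 G) (hD : ¬HasInducedDart G) (hGm : ¬HasInducedGem G)
    {a b c d : V} (hdm : IsInducedDiamond G a b c d) : Twins G a b := by
  obtain ⟨nab, nac, nad, nbc, nbd, ncd, Aab, Aac, Aad, Abc, Abd, Ncd⟩ := hdm
  have hdm1 : IsInducedDiamond G a b c d :=
    ⟨nab, nac, nad, nbc, nbd, ncd, Aab, Aac, Aad, Abc, Abd, Ncd⟩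
  have hdm2 : IsInducedDiamond G b a c d :=
    ⟨nab.symm, nbc, nbd, nac, nad, ncd, Aab.symm, Abc, Abd, Aac, Aad, Ncd⟩
  by_contra htw
  have htw' : closedNbhd G a ≠ closedNbhd G b := htw
  by_cases h1 : closedNbhd G a ⊆ closedNbhd G b
  · by_cases h2 : closedNbhd G b ⊆ closedNbhd G a
    · exact htw' (Set.Subset.antisymm h1 h2)
    · obtain ⟨e, he1, he2⟩ := Set.not_subset.mp h2
      have hq : ¬(e = a ∨ G.Adj a e) := fun hh => he2 (mem_cn.mpr hh)
      push_neg at hq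
      rcases mem_cn.mp he1 with he | hbe
      · exact hq.2 (he ▸ Aab : G.Adj a e)
      · exact key1 hW hD hGm hdm2 hbe hq.1 hq.2
  · obtain ⟨e, he1, he2⟩ := Set.not_subset.mp h1
    have hq : ¬(e = b ∨ G.Adj b e) := fun hh => he2 (mem_cn.mpr hh)
    push_neg at hq
    rcases mem_cn.mp he1 with he | hae
    · exact hq.2 (he ▸ Aab.symm : G.Adj b e)
    · exact key1 hW hD hGm hdm1 hae hq.1 hq.2

private lemma BtoA (hB : ∀ a b c d : V, IsInducedDiamond G a b c d →
      ∃ p ∈ ({a, b, c, d} : Set V), ∃ q ∈ ({a, b, c, d} : Set V), p ≠ q ∧ Twins G p q) :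
    ¬HasInducedW4 G ∧ ¬HasInducedDart G ∧ ¬HasInducedGem G := by
  refine ⟨?_, ?_, ?_⟩
  · rintro ⟨u, a, b, c, d, pw, hua, hub, huc, hud, hab, hbc, hcd, hda, nac, nbd⟩
    obtain ⟨n12, n13, n14, n15, n23, n24, n25, n34, n35, n45⟩ := pw5' pw
    have hdm : IsInducedDiamond G u a b d :=
      ⟨n12, n13, n15, n23, n25, n35, hua, hub, hud, hab, hda.symm, nbd⟩
    obtain ⟨p, hp, q, hq, hpq, htw⟩ := hB u a b d hdm
    simp only [Set.mem_insert_iff, Set.mem_singleton_iff] at hp hq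
    rcases hp with rfl | rfl | rfl | rfl <;> rcases hq with rfl | rfl | rfl | rfl
    exacts [absurd rfl hpq,
      no_twins (Or.inr huc) n24.symm nac htw,
      no_twins (Or.inr hud) n35.symm nbd htw,
      no_twins (Or.inr hub) n35 (fun h => nbd h.symm) htw,
      no_twins (Or.inr huc) n24.symm nac (twins_symm htw),
      absurd rfl hpq,
      no_twins (Or.inr hda.symm) n35.symm nbd htw,
      no_twins (Or.inr hab) n35 (fun h => nbd h.symm) htw,
      no_twins (Or.inr hud) n35.symm nbd (twins_symm htw),
      no_twins (Or.inr hda.symm) n35.symm nbd (twins_symm htw),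
      absurd rfl hpq,
      no_twins (Or.inl rfl) n35 (fun h => nbd h.symm) htw,
      no_twins (Or.inr hub) n35 (fun h => nbd h.symm) (twins_symm htw),
      no_twins (Or.inr hab) n35 (fun h => nbd h.symm) (twins_symm htw),
      no_twins (Or.inl rfl) n35 (fun h => nbd h.symm) (twins_symm htw),
      absurd rfl hpq]
  · rintro ⟨a, b, c, d, e, pw, hdm, hae, nbe, nce, nde⟩
    obtain ⟨n12, n13, n14, n15, n23, n24, n25, n34, n35, n45⟩ := pw5' pw
    have hdm2 := hdm
    obtain ⟨-, -, -, -, -, -, Aab, Aac, Aad, Abc, Abd, Ncd⟩ := hdm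
    obtain ⟨p, hp, q, hq, hpq, htw⟩ := hB a b c d hdm2
    simp only [Set.mem_insert_iff, Set.mem_singleton_iff] at hp hq
    rcases hp with rfl | rfl | rfl | rfl <;> rcases hq with rfl | rfl | rfl | rfl
    exacts [absurd rfl hpq,
      no_twins (Or.inr hae) n25.symm nbe htw,
      no_twins (Or.inr hae) n35.symm nce htw,
      no_twins (Or.inr hae) n45.symm nde htw,
      no_twins (Or.inr hae) n25.symm nbe (twins_symm htw),
      absurd rfl hpq,
      no_twins (Or.inr Abd) n34.symm Ncd htw,
      no_twins (Or.inr Abc) n34 (fun h => Ncd h.symm) htw,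
      no_twins (Or.inr hae) n35.symm nce (twins_symm htw),
      no_twins (Or.inr Abd) n34.symm Ncd (twins_symm htw),
      absurd rfl hpq,
      no_twins (Or.inl rfl) n34 (fun h => Ncd h.symm) htw,
      no_twins (Or.inr hae) n45.symm nde (twins_symm htw),
      no_twins (Or.inr Abc) n34 (fun h => Ncd h.symm) (twins_symm htw),
      no_twins (Or.inl rfl) n34 (fun h => Ncd h.symm) (twins_symm htw),
      absurd rfl hpq]
  · rintro ⟨u, p1, p2, p3, p4, pw, h1, h2, h3, h4, e12, e23, e34, n13, n14, n24⟩
    obtain ⟨m12, m13, m14, m15, m23, m24, m25, m34, m35, m45⟩ := pw5' pw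
    have hdm : IsInducedDiamond G u p2 p1 p3 :=
      ⟨m13, m12, m14, m23.symm, m34, m24, h2, h1, h3, e12.symm, e23, n13⟩
    obtain ⟨p, hp, q, hq, hpq, htw⟩ := hB u p2 p1 p3 hdm
    simp only [Set.mem_insert_iff, Set.mem_singleton_iff] at hp hq
    rcases hp with rfl | rfl | rfl | rfl <;> rcases hq with rfl | rfl | rfl | rfl
    exacts [absurd rfl hpq,
      no_twins (Or.inr h4) m35.symm n24 htw,
      no_twins (Or.inr h3) m24.symm n13 htw,
      no_twins (Or.inr h1) m24 (fun h => n13 h.symm) htw,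
      no_twins (Or.inr h4) m35.symm n24 (twins_symm htw),
      absurd rfl hpq,
      no_twins (Or.inr e23) m24.symm n13 htw,
      no_twins (Or.inr e12.symm) m24 (fun h => n13 h.symm) htw,
      no_twins (Or.inr h3) m24.symm n13 (twins_symm htw),
      no_twins (Or.inr e23) m24.symm n13 (twins_symm htw),
      absurd rfl hpq,
      no_twins (Or.inl rfl) m24 (fun h => n13 h.symm) htw,
      no_twins (Or.inr h1) m24 (fun h => n13 h.symm) (twins_symm htw),
      no_twins (Or.inr e12.symm) m24 (fun h => n13 h.symm) (twins_symm htw),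
      no_twins (Or.inl rfl) m24 (fun h => n13 h.symm) (twins_symm htw),
      absurd rfl hpq]

private lemma sep_aux (hB : ∀ a b c d : V, IsInducedDiamond G a b c d →
      ∃ p ∈ ({a, b, c, d} : Set V), ∃ q ∈ ({a, b, c, d} : Set V), p ≠ q ∧ Twins G p q)
    {v w z y : V} (hvw : G.Adj v w) (hvz : G.Adj v z) (hwz : G.Adj w z)
    (hdw : ¬Dominates G w v) (hdz : ¬Dominates G z v)
    (hy : y = v ∨ G.Adj v y) (hyw : y = w ∨ G.Adj y w) (hyz : y ≠ z)
    (hnyz : ¬G.Adj y z) : False := by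
  have hyw' : G.Adj y w := by
    rcases hyw with rfl | h
    · exact absurd hwz hnyz
    · exact h
  have hvy : G.Adj v y := by
    rcases hy with rfl | h
    · exact absurd hvz hnyz
    · exact h
  have hdm : IsInducedDiamond G v w z y :=
    ⟨hvw.ne, hvz.ne, hvy.ne, hwz.ne, hyw'.ne', hyz.symm, hvw, hvz, hvy, hwz,
      hyw'.symm, fun h => hnyz h.symm⟩
  obtain ⟨p, hp, q, hq, hpq, htw⟩ := hB v w z y hdm
  simp only [Set.mem_insert_iff, Set.mem_singleton_iff] at hp hq
  rcases hp with rfl | rfl | rfl | rfl <;> rcases hq with rfl | rfl | rfl | rfl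
  exacts [absurd rfl hpq,
    hdw (twins_dom htw),
    hdz (twins_dom htw),
    no_twins (Or.inr hvz) hyz.symm hnyz htw,
    hdw (twins_dom (twins_symm htw)),
    absurd rfl hpq,
    no_twins (Or.inr hyw'.symm) hyz (fun h => hnyz h.symm) htw,
    no_twins (Or.inr hwz) hyz.symm hnyz htw,
    hdz (twins_dom (twins_symm htw)),
    no_twins (Or.inr hyw'.symm) hyz (fun h => hnyz h.symm) (twins_symm htw),
    absurd rfl hpq,
    no_twins (Or.inl rfl) hyz.symm hnyz htw,
    no_twins (Or.inr hvz) hyz.symm hnyz (twins_symm htw),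
    no_twins (Or.inr hwz) hyz.symm hnyz (twins_symm htw),
    no_twins (Or.inl rfl) hyz.symm hnyz (twins_symm htw),
    absurd rfl hpq]

private lemma BtoC (hB : ∀ a b c d : V, IsInducedDiamond G a b c d →
      ∃ p ∈ ({a, b, c, d} : Set V), ∃ q ∈ ({a, b, c, d} : Set V), p ≠ q ∧ Twins G p q) :
    ∀ v : V, BlockSeparable G v := by
  intro v w hw z hz hwz hdw hdz y hy
  rw [SimpleGraph.mem_neighborSet] at hw hz
  have hy' : y = v ∨ G.Adj v y := mem_cn.mp hy
  constructor
  · intro h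
    by_contra hc
    push_neg at hc
    exact sep_aux hB hw hz hwz hdw hdz hy' h hc.1 hc.2
  · intro h
    by_contra hc
    push_neg at hc
    exact sep_aux hB hz hw hwz.symm hdz hdw hy' h hc.1 hc.2

private lemma CtoA (hC : ∀ v : V, BlockSeparable G v) :
    ¬HasInducedW4 G ∧ ¬HasInducedDart G ∧ ¬HasInducedGem G := by
  refine ⟨?_, ?_, ?_⟩
  · rintro ⟨u, a, b, c, d, pw, hua, hub, huc, hud, hab, hbc, hcd, hda, nac, nbd⟩
    obtain ⟨n12, n13, n14, n15, n23, n24, n25, n34, n35, n45⟩ := pw5' pw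
    have T := hC u a ((G.mem_neighborSet u a).mpr hua) b ((G.mem_neighborSet u b).mpr hub)
      hab (no_dom (Or.inr huc) n24.symm nac) (no_dom (Or.inr hud) n35.symm nbd)
    rcases (T c (mem_cn.mpr (Or.inr huc))).mpr (Or.inr hbc.symm) with h | h
    · exact n24 h.symm
    · exact nac h.symm
  · rintro ⟨a, b, c, d, e, pw, hdm, hae, nbe, nce, nde⟩
    obtain ⟨n12, n13, n14, n15, n23, n24, n25, n34, n35, n45⟩ := pw5' pw
    obtain ⟨-, -, -, -, -, -, Aab, Aac, Aad, Abc, Abd, Ncd⟩ := hdm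
    have T := hC a b ((G.mem_neighborSet a b).mpr Aab) c ((G.mem_neighborSet a c).mpr Aac)
      Abc (no_dom (Or.inr hae) n25.symm nbe) (no_dom (Or.inr hae) n35.symm nce)
    rcases (T d (mem_cn.mpr (Or.inr Aad))).mp (Or.inr Abd.symm) with h | h
    · exact n34 h.symm
    · exact Ncd h.symm
  · rintro ⟨u, p1, p2, p3, p4, pw, h1, h2, h3, h4, e12, e23, e34, n13, n14, n24⟩
    obtain ⟨m12, m13, m14, m15, m23, m24, m25, m34, m35, m45⟩ := pw5' pw
    have T := hC u p2 ((G.mem_neighborSet u p2).mpr h2) p3 ((G.mem_neighborSet u p3).mpr h3)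
      e23 (no_dom (Or.inr h4) m35.symm n24)
      (no_dom (Or.inr h1) m24 (fun h => n13 h.symm))
    rcases (T p1 (mem_cn.mpr (Or.inr h1))).mp (Or.inr e12) with h | h
    · exact m24 h
    · exact n13 h

end MainProofs
/-- `{W₄, dart, gem}`-free graphs are exactly those in which every induced
diamond has twins, and exactly those whose every vertex is block separable. -/
theorem w4_dart_gem_free_characterization (G : SimpleGraph V) :
    ((¬HasInducedW4 G ∧ ¬HasInducedDart G ∧ ¬HasInducedGem G) ↔
      (∀ a b c d : V, IsInducedDiamond G a b c d →
        ∃ p ∈ ({a, b, c, d} : Set V), ∃ q ∈ ({a, b, c, d} : Set V), p ≠ q ∧ Twins G p q)) ∧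
    ((∀ a b c d : V, IsInducedDiamond G a b c d →
        ∃ p ∈ ({a, b, c, d} : Set V), ∃ q ∈ ({a, b, c, d} : Set V), p ≠ q ∧ Twins G p q) ↔
      (∀ v : V, BlockSeparable G v)) := by
  have hAB : (¬HasInducedW4 G ∧ ¬HasInducedDart G ∧ ¬HasInducedGem G) →
      (∀ a b c d : V, IsInducedDiamond G a b c d →
        ∃ p ∈ ({a, b, c, d} : Set V), ∃ q ∈ ({a, b, c, d} : Set V), p ≠ q ∧ Twins G p q) := by
    rintro ⟨h1, h2, h3⟩ a b c d hd
    exact ⟨a, by simp, b, by simp, hd.1, AtoB h1 h2 h3 hd⟩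
  exact ⟨⟨hAB, BtoA⟩, ⟨BtoC, fun hC => hAB (CtoA hC)⟩⟩
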